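/- arXiv:0806.1117 — 4 statements merged into one kernel-verified Lean document; each statement's English description precedes it below -/
import Mathlib

section
/- Let D be a real vector space, c : D × D → D skew-symmetric bilinear, and E = D × D with Lie bracket [(x,u),(y,v)] = (0,c(x,y)). Define φ : D → E by φ(x) = (x,x) and Q : E → E by Q(a,b) = (b,b). Then: (i) φ is an injective linear map; (ii) Q is linear and idempotent (Q∘Q = Q) with range equal to the image of φ; (iii) for all x,y ∈ D, Q([φ(x),φ(y)]) = φ(c(x,y)). Hence the nonholonomic reduction of the Lie bracket of E along the projection Q recovers the original bracket c on D. -/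
/-- Embedding the quasi-Lie algebra `D` into the 2-step nilpotent Lie algebra
`E = D × D` by `φ x = (x,x)`, with projection `Q (a,b) = (b,b)`, the
nonholonomic reduction `Q ∘ [·,·]` recovers the original bracket `c`. -/
theorem nonholonomic_reduction_recovers_bracket
    (D : Type*) [AddCommGroup D] [Module ℝ D]
    (c : D →ₗ[ℝ] D →ₗ[ℝ] D)
    (hskew : ∀ x y : D, c x y = - c y x) :
    let br : D × D → D × D → D × D := fun p q => (0, c p.1 q.1)
    let φ : D → D × D := fun x => (x, x)
    let Q : D × D → D × D := fun p => (p.2, p.2)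
    -- (i) φ is an injective linear map
    (Function.Injective φ) ∧
    (∀ (a : ℝ) (x y : D), φ (a • x + y) = a • φ x + φ y) ∧
    -- (ii) Q is linear, idempotent, with range equal to the image of φ
    (∀ (a : ℝ) (p q : D × D), Q (a • p + q) = a • Q p + Q q) ∧
    (Q ∘ Q = Q) ∧
    (Set.range Q = Set.range φ) ∧
    -- (iii) the reduced bracket recovers c
    (∀ x y : D, Q (br (φ x) (φ y)) = φ (c x y)) := by
  intro br φ Q
  refine ⟨fun a b h => congrArg Prod.fst h, fun a x y => rfl, fun a p q => rfl,
    funext fun p => rfl, ?_, fun x y => rfl⟩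
  ext p
  constructor
  · rintro ⟨q, rfl⟩; exact ⟨q.2, rfl⟩
  · rintro ⟨x, rfl⟩; exact ⟨(x, x), rfl⟩
end

section
/- Every finite-dimensional quasi-Lie algebra is a nonholonomic reduction of a Lie algebra: if D is a finite-dimensional real vector space equipped with a skew-symmetric bilinear bracket c : D × D → D (not necessarily satisfying Jacobi), then there exist a finite-dimensional real Lie algebra (E, [·,·]_E), an injective linear map φ : D → E, and a linear projection P : E → E with P∘P = P and range(P) = φ(D), such that P([φ(x),φ(y)]_E) = φ(c(x,y)) for all x,y ∈ D. -/
/-- Two-step nilpotent Lie ring on `D × D` with bracket `(0, c x.1 y.1)`. -/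
def nhLieRing (D : Type) [AddCommGroup D] [Module ℝ D]
    (c : D →ₗ[ℝ] D →ₗ[ℝ] D)
    (hskew : ∀ x y : D, c x y = - c y x) : LieRing (D × D) where
  bracket p q := (0, c p.1 q.1)
  add_lie p q r := by
    show ((0 : D), c (p.1 + q.1) r.1) = ((0 : D), c p.1 r.1) + ((0 : D), c q.1 r.1)
    simp [Prod.ext_iff]
  lie_add p q r := by
    show ((0 : D), c p.1 (q.1 + r.1)) = ((0 : D), c p.1 q.1) + ((0 : D), c p.1 r.1)
    simp [Prod.ext_iff]
  lie_self p := by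
    show ((0 : D), c p.1 p.1) = 0
    have h : c p.1 p.1 = 0 := by
      have h2 : (2 : ℝ) • c p.1 p.1 = 0 := by
        rw [two_smul]
        nth_rewrite 2 [hskew]
        simp
      have := smul_eq_zero.mp h2
      simpa using this
    simp [h, Prod.ext_iff]
  leibniz_lie p q r := by
    show ((0 : D), c p.1 (0 : D))
        = ((0 : D), c (0 : D) r.1) + ((0 : D), c q.1 (0 : D))
    simp [Prod.ext_iff]

def nhLieAlgebra (D : Type) [AddCommGroup D] [Module ℝ D]
    (c : D →ₗ[ℝ] D →ₗ[ℝ] D)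
    (hskew : ∀ x y : D, c x y = - c y x) :
    @LieAlgebra ℝ (D × D) _ (nhLieRing D c hskew) :=
  letI := nhLieRing D c hskew
  { (inferInstance : Module ℝ (D × D)) with
    lie_smul := by
      intro t p q
      show ((0 : D), c p.1 (t • q.1)) = t • ((0 : D), c p.1 q.1)
      simp [Prod.ext_iff] }

/-- Every finite-dimensional quasi-Lie algebra is a nonholonomic reduction of a
(finite-dimensional) Lie algebra. -/
theorem quasiLie_is_nonholonomic_reduction_of_Lie
    (D : Type) [AddCommGroup D] [Module ℝ D] [FiniteDimensional ℝ D]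
    (c : D →ₗ[ℝ] D →ₗ[ℝ] D)
    (hskew : ∀ x y : D, c x y = - c y x) :
    ∃ (E : Type) (_ : LieRing E) (_ : LieAlgebra ℝ E),
      FiniteDimensional ℝ E ∧
      ∃ (φ : D →ₗ[ℝ] E) (P : E →ₗ[ℝ] E),
        Function.Injective φ ∧
        P ∘ₗ P = P ∧
        LinearMap.range P = LinearMap.range φ ∧
        ∀ x y : D, P ⁅φ x, φ y⁆ = φ (c x y) := by
  have hfin : FiniteDimensional ℝ (D × D) := inferInstance
  letI instLR := nhLieRing D c hskew
  letI instLA := nhLieAlgebra D c hskew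
  refine ⟨D × D, instLR, instLA, hfin, ?_⟩
  -- φ x = (x, x), P (a, b) = (b, b)
  refine ⟨(LinearMap.id : D →ₗ[ℝ] D).prod LinearMap.id,
    ((LinearMap.snd ℝ D D).prod (LinearMap.snd ℝ D D)), ?_, ?_, ?_, ?_⟩
  · intro x y h
    exact congrArg Prod.fst h
  · ext p <;> rfl
  · apply le_antisymm
    · rintro p ⟨q, rfl⟩
      exact ⟨q.2, rfl⟩
    · rintro p ⟨x, rfl⟩
      exact ⟨(x, x), rfl⟩
  · intro x y
    show ((c x y : D), (c x y : D)) = _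
    rfl
end

section
/- Let J, m, a, b be real numbers with J + m·a² ≠ 0. In the Lie algebra se(2) with basis E1, E2, E3 satisfying [E3,E1]=E2, [E2,E3]=E1, [E1,E2]=0, set e1 = E3, e2 = E1, e3 = −m·a·E3 − m·a·b·E1 + (J+m·a²)·E2, and let D = span{e1,e2}. Then {e1,e2,e3} is a basis of se(2), and if P : se(2) → D denotes the projection with kernel span{e3}, the reduced bracket satisfies P([e1,e2]) = (m·a/(J+m·a²))·e1 + (m·a·b/(J+m·a²))·e2. -/
/-- se(2) realized on ℝ³: a vector `u` represents `u 0 • E1 + u 1 • E2 + u 2 • E3`,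
and the bracket is determined by `[E3,E1]=E2`, `[E2,E3]=E1`, `[E1,E2]=0`. -/
noncomputable def se2br (u v : Fin 3 → ℝ) : Fin 3 → ℝ :=
  ![u 1 * v 2 - u 2 * v 1, u 2 * v 0 - u 0 * v 2, 0]

/-- Chaplygin sleigh: `{e1,e2,e3}` is a basis of se(2) adapted to `D ⊕ D^⊥`, and
the reduced bracket along the projection `P` with kernel `span{e3}` satisfies
`P [e1,e2] = (ma/(J+ma²)) e1 + (mab/(J+ma²)) e2`. -/
theorem chaplygin_sleigh_reduced_bracket
    (J m a b : ℝ) (h : J + m * a ^ 2 ≠ 0) :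
    let E1 : Fin 3 → ℝ := ![1, 0, 0]
    let E2 : Fin 3 → ℝ := ![0, 1, 0]
    let E3 : Fin 3 → ℝ := ![0, 0, 1]
    let e1 : Fin 3 → ℝ := E3
    let e2 : Fin 3 → ℝ := E1
    let e3 : Fin 3 → ℝ := -(m * a) • E3 - (m * a * b) • E1 + (J + m * a ^ 2) • E2
    -- {e1,e2,e3} is a basis of se(2)
    (LinearIndependent ℝ ![e1, e2, e3] ∧
      Submodule.span ℝ {e1, e2, e3} = ⊤) ∧
    -- the reduced bracket along the projection onto D = span{e1,e2} with kernel span{e3}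
    (∀ P : (Fin 3 → ℝ) →ₗ[ℝ] (Fin 3 → ℝ),
      P e1 = e1 → P e2 = e2 → P e3 = 0 →
      P (se2br e1 e2) =
        (m * a / (J + m * a ^ 2)) • e1 + (m * a * b / (J + m * a ^ 2)) • e2) := by
  intro E1 E2 E3 e1 e2 e3
  have hli : LinearIndependent ℝ ![e1, e2, e3] := by
    rw [Fintype.linearIndependent_iff]
    intro g hg i
    have h0 := congrFun hg 0
    have h1 := congrFun hg 1
    have h2 := congrFun hg 2
    simp [Fin.sum_univ_three, e1, e2, e3, E1, E2, E3] at h0 h1 h2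
    have hg2 : g 2 = 0 := by
      rcases h1 with h' | h'
      · exact h'
      · exact absurd h' h
    fin_cases i
    · simpa [hg2] using h2
    · simpa [hg2] using h0
    · exact hg2
  refine ⟨⟨hli, ?_⟩, ?_⟩
  · have hr : Set.range ![e1, e2, e3] = {e1, e2, e3} := by
      ext x
      simp [Fin.exists_fin_succ]
      tauto
    rw [← hr]
    apply hli.span_eq_top_of_card_eq_finrank
    simp
  · intro P h1 h2 h3
    have key : se2br e1 e2 =
        (m * a / (J + m * a ^ 2)) • e1 + (m * a * b / (J + m * a ^ 2)) • e2 +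
          (1 / (J + m * a ^ 2)) • e3 := by
      funext i
      fin_cases i <;>
        simp [se2br, e1, e2, e3, E1, E2, E3] <;> field_simp <;> ring
    rw [key, map_add, map_add, map_smul, map_smul, map_smul, h1, h2, h3, smul_zero, add_zero]
end

section
/- Energy conservation for the snakeboard: let m, r, J0, J1 ∈ ℝ and let φ, y1, y2, y3 : ℝ → ℝ be differentiable functions satisfying φ' = y2, (d/dt)(y1 + sin(2φ)·y3) = 0, (d/dt)(y2) = 0, and (d/dt)(4·m·r²·cos²(φ)·y3 + J0·sin(2φ)·y1) = 2·J0·cos(2φ)·y1·y2 − 2·m·r²·sin(2φ)·y2·y3. Then the energy E(t) = 2·m·r²·cos²(φ(t))·y3(t)² + J0·sin(2φ(t))·y1(t)·y3(t) + ½·J0·y1(t)² + J1·y2(t)² is constant in t. -/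
open Real

/-- Energy conservation for the snakeboard: along any solution of the
nonholonomic Euler–Lagrange equations the restricted Lagrangian (energy) is
constant. -/
theorem snakeboard_energy_conservation
    (m r J0 J1 : ℝ)
    (φ y1 y2 y3 : ℝ → ℝ)
    (hφ : Differentiable ℝ φ) (hy1 : Differentiable ℝ y1)
    (hy2 : Differentiable ℝ y2) (hy3 : Differentiable ℝ y3)
    (heqφ : ∀ t : ℝ, deriv φ t = y2 t)
    (heq1 : ∀ t : ℝ, deriv (fun s => y1 s + sin (2 * φ s) * y3 s) t = 0)
    (heq2 : ∀ t : ℝ, deriv y2 t = 0)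
    (heq3 : ∀ t : ℝ,
      deriv (fun s => 4 * m * r ^ 2 * (cos (φ s)) ^ 2 * y3 s
          + J0 * sin (2 * φ s) * y1 s) t
        = 2 * J0 * cos (2 * φ t) * y1 t * y2 t
          - 2 * m * r ^ 2 * sin (2 * φ t) * y2 t * y3 t) :
    ∀ t t' : ℝ,
      2 * m * r ^ 2 * (cos (φ t)) ^ 2 * (y3 t) ^ 2
          + J0 * sin (2 * φ t) * y1 t * y3 t
          + (1 / 2) * J0 * (y1 t) ^ 2 + J1 * (y2 t) ^ 2
        = 2 * m * r ^ 2 * (cos (φ t')) ^ 2 * (y3 t') ^ 2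
          + J0 * sin (2 * φ t') * y1 t' * y3 t'
          + (1 / 2) * J0 * (y1 t') ^ 2 + J1 * (y2 t') ^ 2 := by
  set E : ℝ → ℝ := fun t =>
    2 * m * r ^ 2 * (cos (φ t)) ^ 2 * (y3 t) ^ 2
      + J0 * sin (2 * φ t) * y1 t * y3 t
      + (1 / 2) * J0 * (y1 t) ^ 2 + J1 * (y2 t) ^ 2 with hEdef
  have key : ∀ x : ℝ, HasDerivAt E 0 x := by
    intro x
    have hφ' : HasDerivAt φ (y2 x) x := by
      simpa [heqφ x] using (hφ x).hasDerivAt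
    have h1 : HasDerivAt y1 (deriv y1 x) x := (hy1 x).hasDerivAt
    have h2 : HasDerivAt y2 0 x := by
      simpa [heq2 x] using (hy2 x).hasDerivAt
    have h3 : HasDerivAt y3 (deriv y3 x) x := (hy3 x).hasDerivAt
    have h2φ : HasDerivAt (fun s => 2 * φ s) (2 * y2 x) x := hφ'.const_mul 2
    have hs2 : HasDerivAt (fun s => sin (2 * φ s)) (cos (2 * φ x) * (2 * y2 x)) x :=
      h2φ.sin
    have hc : HasDerivAt (fun s => cos (φ s)) (-sin (φ x) * y2 x) x := hφ'.cos
    have hc2 : HasDerivAt (fun s => (cos (φ s)) ^ 2)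
        (2 * (cos (φ x)) ^ 1 * (-sin (φ x) * y2 x)) x := hc.pow 2
    have htrig : sin (2 * φ x) = 2 * sin (φ x) * cos (φ x) := Real.sin_two_mul (φ x)
    -- equation 1, expanded
    have hF1 := h1.add (hs2.mul h3)
    have eq1 : deriv y1 x + (cos (2 * φ x) * (2 * y2 x) * y3 x
        + sin (2 * φ x) * deriv y3 x) = 0 := by
      rw [← hF1.deriv]; exact heq1 x
    -- equation 3, expanded
    have hF3 := ((hc2.const_mul (4 * m * r ^ 2)).mul h3).add
      ((hs2.const_mul J0).mul h1)
    have eq3 : (4 * m * r ^ 2 * (2 * (cos (φ x)) ^ 1 * (-sin (φ x) * y2 x)) * y3 x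
            + 4 * m * r ^ 2 * (cos (φ x)) ^ 2 * deriv y3 x)
          + (J0 * (cos (2 * φ x) * (2 * y2 x)) * y1 x
            + J0 * sin (2 * φ x) * deriv y1 x)
        = 2 * J0 * cos (2 * φ x) * y1 x * y2 x
          - 2 * m * r ^ 2 * sin (2 * φ x) * y2 x * y3 x := by
      rw [← hF3.deriv]; exact heq3 x
    -- derivative of E
    have hE := (((((hc2.const_mul (2 * m * r ^ 2)).mul (h3.pow 2)).add
      (((hs2.const_mul J0).mul h1).mul h3)).add
      ((h1.pow 2).const_mul ((1 / 2) * J0))).add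
      ((h2.pow 2).const_mul J1))
    have hE0 : HasDerivAt E 0 x := by
      convert hE using 1
      iterate 3 rfl
      simp only [Pi.mul_apply, Pi.pow_apply]
      linear_combination (-(y3 x)) * eq3 + (-(J0 * y1 x)) * eq1
        + 2 * m * r ^ 2 * y2 x * (y3 x) ^ 2 * htrig
    exact hE0
  have hdiff : Differentiable ℝ E := fun x => (key x).differentiableAt
  intro t t'
  exact is_const_of_deriv_eq_zero hdiff (fun x => (key x).deriv) t t'
end
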